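/- Let A : (0,∞) → [0,∞) be a nondecreasing, locally absolutely continuous, unbounded function and let δ ∈ (0,1) with γ := δ·n/(n-1) > 1 for some n ≥ 2. Suppose E ⊆ [1,∞) is a measurable set such that A(r)^γ ≤ C r A'(r) for almost every r ∈ E, for some constant C > 0. If A(r₀) > 0 for some r₀ ≥ 1, then ∫_E dr/r ≤ log r₀ + (C/(γ-1)) A(r₀)^{1-γ} < ∞. -/

import Mathlib

open MeasureTheory ENNReal

section Aux

lemma aux_deriv_nonneg {f : ℝ → ℝ} (hf : MonotoneOn f (Set.Ioi 0)) {x : ℝ} (hx : 0 < x) :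
    0 ≤ deriv f x := by
  by_cases hd : DifferentiableAt ℝ f x
  · have h := hd.hasDerivAt
    rw [hasDerivAt_iff_tendsto_slope] at h
    have h' : Filter.Tendsto (slope f x) (nhdsWithin x (Set.Ioi x)) (nhds (deriv f x)) :=
      h.mono_left (nhdsWithin_mono x (by intro y hy; exact ne_of_gt hy))
    refine ge_of_tendsto h' ?_
    filter_upwards [self_mem_nhdsWithin] with y hy
    rw [slope_def_field]
    have hxy : x < y := hy
    exact div_nonneg (sub_nonneg.2 (hf hx (hx.trans hxy) hxy.le)) (sub_nonneg.2 hxy.le)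
  · rw [deriv_zero_of_not_differentiableAt hd]

lemma aux_lint1 {γ a : ℝ} (hγ : 1 < γ) (ha : 0 < a) :
    ∫⁻ u in Set.Ioi a, ENNReal.ofReal (γ * u ^ (-γ - 1)) = ENNReal.ofReal (a ^ (-γ)) := by
  have hexp : (-γ - 1 : ℝ) < -1 := by linarith
  have hint : IntegrableOn (fun u : ℝ => γ * u ^ (-γ - 1)) (Set.Ioi a) :=
    (integrableOn_Ioi_rpow_of_lt hexp ha).const_mul γ
  have hnn : 0 ≤ᵐ[volume.restrict (Set.Ioi a)] fun u : ℝ => γ * u ^ (-γ - 1) := by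
    filter_upwards [ae_restrict_mem measurableSet_Ioi] with u hu
    have : (0:ℝ) < u := ha.trans hu
    positivity
  rw [← ofReal_integral_eq_lintegral_ofReal hint hnn]
  congr 1
  rw [MeasureTheory.integral_const_mul, integral_Ioi_rpow_of_lt hexp ha]
  have h1 : (-γ - 1) + 1 = -γ := by ring
  rw [h1]
  field_simp

lemma aux_lint2 {γ a : ℝ} (hγ : 1 < γ) (ha : 0 < a) :
    ∫⁻ u in Set.Ioi a, ENNReal.ofReal (γ * (u ^ (-γ) - a * u ^ (-γ - 1)))
      = ENNReal.ofReal (a ^ (1 - γ) / (γ - 1)) := by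
  have hexp1 : (-γ : ℝ) < -1 := by linarith
  have hexp : (-γ - 1 : ℝ) < -1 := by linarith
  have hint : IntegrableOn (fun u : ℝ => γ * (u ^ (-γ) - a * u ^ (-γ - 1))) (Set.Ioi a) :=
    (((integrableOn_Ioi_rpow_of_lt hexp1 ha).sub
      ((integrableOn_Ioi_rpow_of_lt hexp ha).const_mul a)).const_mul γ)
  have hnn : 0 ≤ᵐ[volume.restrict (Set.Ioi a)]
      fun u : ℝ => γ * (u ^ (-γ) - a * u ^ (-γ - 1)) := by
    filter_upwards [ae_restrict_mem measurableSet_Ioi] with u hu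
    have hu0 : (0:ℝ) < u := ha.trans hu
    have hkey : u ^ (-γ) = u ^ (-γ - 1) * u := by
      have h := Real.rpow_add_one hu0.ne' (-γ - 1)
      rw [show -γ - 1 + 1 = -γ from by ring] at h
      exact h
    have h1 : u ^ (-γ) - a * u ^ (-γ - 1) = u ^ (-γ - 1) * (u - a) := by rw [hkey]; ring
    rw [h1]
    have : (0:ℝ) < u ^ (-γ - 1) := Real.rpow_pos_of_pos hu0 _
    have : (0:ℝ) ≤ u - a := by simp only [Set.mem_Ioi] at hu; linarith
    positivity
  rw [← ofReal_integral_eq_lintegral_ofReal hint hnn]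
  congr 1
  rw [MeasureTheory.integral_const_mul,
    integral_sub (integrableOn_Ioi_rpow_of_lt hexp1 ha)
      ((integrableOn_Ioi_rpow_of_lt hexp ha).const_mul a),
    MeasureTheory.integral_const_mul, integral_Ioi_rpow_of_lt hexp1 ha,
    integral_Ioi_rpow_of_lt hexp ha]
  have h1 : (-γ) + 1 = 1 - γ := by ring
  have h2 : (-γ - 1) + 1 = -γ := by ring
  rw [h1, h2]
  have haγ : a * a ^ (-γ) = a ^ (1 - γ) := by
    rw [show (1 - γ : ℝ) = 1 + (-γ) by ring, Real.rpow_add ha, Real.rpow_one]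
  have hγ0 : γ ≠ 0 := by linarith
  have hγ1 : γ - 1 ≠ 0 := by linarith
  have hγ1' : (1 : ℝ) - γ ≠ 0 := by linarith
  rw [show a * (-a ^ (-γ) / -γ) = a * a ^ (-γ) / γ from by field_simp, haγ]
  field_simp
  ring

end Aux

/-- a differential inequality on a set `E` forces `E` to have finite
logarithmic measure, with an explicit bound. Here `γ = δ·n/(n-1) > 1`. -/
theorem stmt3 {n : ℕ} (hn : 2 ≤ n) (A : ℝ → ℝ) (δ C r₀ : ℝ)
    (hδl : ((n : ℝ) - 1) / n < δ) (hδu : δ < 1)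
    (hA0 : ∀ r, 0 < r → 0 ≤ A r)
    (hmono : MonotoneOn A (Set.Ioi (0 : ℝ)))
    (hunb : ∀ M : ℝ, ∃ r, 0 < r ∧ M < A r)
    (hftc : ∀ a b : ℝ, 0 < a → a ≤ b →
      IntervalIntegrable (deriv A) volume a b ∧ A b - A a = ∫ t in a..b, deriv A t)
    (E : Set ℝ) (hE : E ⊆ Set.Ici 1) (hEm : MeasurableSet E)
    (hC : 0 < C)
    (hdiff : ∀ᵐ r ∂volume, r ∈ E →
      A r ^ (δ * n / ((n : ℝ) - 1)) ≤ C * r * deriv A r)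
    (hr₀ : 1 ≤ r₀) (hA : 0 < A r₀) :
    ∫⁻ r in E, ENNReal.ofReal (1 / r) ≤
      ENNReal.ofReal (Real.log r₀ +
        C / (δ * n / ((n : ℝ) - 1) - 1) * A r₀ ^ (1 - δ * n / ((n : ℝ) - 1))) := by
  have hn2 : (2:ℝ) ≤ (n:ℝ) := by exact_mod_cast hn
  set γ : ℝ := δ * n / ((n:ℝ) - 1) with hγdef
  have hγ : 1 < γ := by
    rw [hγdef, lt_div_iff₀ (by linarith)]
    rw [div_lt_iff₀ (by linarith)] at hδl
    linarith
  set a₀ := A r₀ with ha₀def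
  have ha₀ : 0 < a₀ := hA
  have hr₀0 : (0:ℝ) < r₀ := lt_of_lt_of_le one_pos hr₀
  have hg0 : ∀ x, 0 < x → 0 ≤ deriv A x := fun x hx => aux_deriv_nonneg hmono hx
  have hgm : Measurable (deriv A) := measurable_deriv A
  -- monotone measurable extension of A
  set Ab : ℝ → ℝ := fun r => A (max r 1) with hAbdef
  have hAbmono : Monotone Ab := fun x y hxy =>
    hmono (lt_of_lt_of_le one_pos (le_max_right x 1))
      (lt_of_lt_of_le one_pos (le_max_right y 1)) (max_le_max hxy le_rfl)
  have hAbmeas : Measurable Ab := hAbmono.measurable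
  have hAbeq : ∀ r, 1 ≤ r → Ab r = A r := fun r hr => by
    rw [hAbdef]; simp [max_eq_left hr]
  -- the logarithmic measure
  set ν : Measure ℝ := volume.withDensity (fun r => ENNReal.ofReal (1/r)) with hν
  have hνap : ∀ B : Set ℝ, MeasurableSet B → ν B = ∫⁻ r in B, ENNReal.ofReal (1/r) :=
    fun B hB => withDensity_apply _ hB
  -- part 1 : E ∩ [1, r₀]
  have hpart1 : ν (E ∩ Set.Icc 1 r₀) ≤ ENNReal.ofReal (Real.log r₀) := by
    refine le_trans (measure_mono Set.inter_subset_right) ?_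
    rw [hνap _ measurableSet_Icc]
    have hint : IntegrableOn (fun r : ℝ => 1/r) (Set.Icc 1 r₀) := by
      apply ContinuousOn.integrableOn_Icc
      apply ContinuousOn.div continuousOn_const continuousOn_id
      intro x hx; exact ne_of_gt (lt_of_lt_of_le one_pos hx.1)
    have hnn : 0 ≤ᵐ[volume.restrict (Set.Icc 1 r₀)] fun r : ℝ => 1/r := by
      filter_upwards [ae_restrict_mem measurableSet_Icc] with r hr
      have : (0:ℝ) < r := lt_of_lt_of_le one_pos hr.1
      positivity
    rw [← ofReal_integral_eq_lintegral_ofReal hint hnn]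
    apply ENNReal.ofReal_le_ofReal
    rw [MeasureTheory.integral_Icc_eq_integral_Ioc, ← intervalIntegral.integral_of_le hr₀]
    rw [integral_one_div (by rw [Set.uIcc_of_le hr₀]; intro h; linarith [h.1])]
    rw [div_one]
  -- part 2 : S = E ∩ (r₀, ∞)
  set S := E ∩ Set.Ioi r₀ with hSdef
  have hSm : MeasurableSet S := hEm.inter measurableSet_Ioi
  have hpart2 : ν S ≤ ENNReal.ofReal (C / (γ - 1) * a₀ ^ (1 - γ)) := by
    -- the product function
    set G : ℝ × ℝ → ℝ≥0∞ := fun p =>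
      if Ab p.1 < p.2 then
        ENNReal.ofReal (C * deriv A p.1) * ENNReal.ofReal (γ * p.2 ^ (-γ - 1))
      else 0 with hGdef
    have hGmeas : Measurable G := by
      apply Measurable.ite
      · exact measurableSet_lt (hAbmeas.comp measurable_fst) measurable_snd
      · apply Measurable.mul (f := fun p : ℝ × ℝ => ENNReal.ofReal (C * deriv A p.1)) (g := fun p : ℝ × ℝ => ENNReal.ofReal (γ * p.2 ^ (-γ - 1)))
        · exact ENNReal.measurable_ofReal.comp ((hgm.comp measurable_fst).const_mul C)
        · have h2 : Measurable fun p : ℝ × ℝ => γ * p.2 ^ (-γ - 1) := by fun_prop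
          exact ENNReal.measurable_ofReal.comp h2
      · exact measurable_const
    -- pointwise bound on S
    have hptwise : ∀ᵐ r ∂(volume.restrict S),
        ENNReal.ofReal (1/r) ≤ ∫⁻ u in Set.Ioi a₀, G (r, u) := by
      have hdiff' : ∀ᵐ r ∂(volume.restrict S), r ∈ E → A r ^ γ ≤ C * r * deriv A r :=
        ae_restrict_of_ae hdiff
      filter_upwards [hdiff', ae_restrict_mem hSm] with r hdr hrS
      have hrr₀ : r₀ < r := hrS.2
      have hr1 : (1:ℝ) ≤ r := hr₀.trans hrr₀.le
      have hr0 : (0:ℝ) < r := lt_of_lt_of_le one_pos hr1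
      have hAr : a₀ ≤ A r := hmono hr₀0 hr0 hrr₀.le
      have hAr0 : 0 < A r := ha₀.trans_le hAr
      have hAbr : Ab r = A r := hAbeq r hr1
      have hineq := hdr hrS.1
      have hgr : 0 ≤ deriv A r := hg0 r hr0
      have hRHS : ∫⁻ u in Set.Ioi a₀, G (r, u)
          = ENNReal.ofReal (C * deriv A r * A r ^ (-γ)) := by
        have h1 : ∀ u : ℝ, G (r, u) = Set.indicator (Set.Ioi (A r))
            (fun u => ENNReal.ofReal (C * deriv A r) * ENNReal.ofReal (γ * u ^ (-γ - 1))) u := by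
          intro u
          rw [hGdef]
          simp only [Set.indicator_apply, Set.mem_Ioi, hAbr]
        rw [lintegral_congr h1, lintegral_indicator measurableSet_Ioi,
          Measure.restrict_restrict measurableSet_Ioi,
          Set.inter_eq_left.mpr (Set.Ioi_subset_Ioi hAr),
          lintegral_const_mul _ (by fun_prop : Measurable fun u : ℝ =>
            ENNReal.ofReal (γ * u ^ (-γ - 1))),
          aux_lint1 hγ hAr0, ← ENNReal.ofReal_mul (by positivity)]
      rw [hRHS]
      apply ENNReal.ofReal_le_ofReal
      have hB : (0:ℝ) < A r ^ γ := Real.rpow_pos_of_pos hAr0 γ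
      rw [Real.rpow_neg hAr0.le]
      have h1 : (1:ℝ) ≤ C * r * deriv A r / A r ^ γ := (one_le_div hB).mpr hineq
      calc 1/r ≤ (C * r * deriv A r / A r ^ γ)/r := by gcongr
        _ = C * deriv A r * (A r ^ γ)⁻¹ := by field_simp
    -- inner bound for fixed u
    have hinner : ∀ u ∈ Set.Ioi a₀, ∫⁻ r in S, G (r, u)
        ≤ ENNReal.ofReal (C * (u - a₀)) * ENNReal.ofReal (γ * u ^ (-γ - 1)) := by
      intro u hu
      have hua₀ : a₀ < u := hu
      have h1 : ∀ r : ℝ, G (r, u) = Set.indicator {r : ℝ | Ab r < u}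
          (fun r => ENNReal.ofReal (C * deriv A r)) r * ENNReal.ofReal (γ * u ^ (-γ - 1)) := by
        intro r
        rw [hGdef]
        simp only [Set.indicator_apply, Set.mem_setOf_eq, ite_mul, zero_mul]
      rw [lintegral_congr h1, lintegral_mul_const' _ _ ENNReal.ofReal_ne_top]
      apply mul_le_mul_left
      -- main sup argument
      have hTm : MeasurableSet {r : ℝ | Ab r < u} :=
        measurableSet_lt hAbmeas measurable_const
      rw [lintegral_indicator hTm, Measure.restrict_restrict hTm]
      set T' := {r : ℝ | r₀ ≤ r ∧ Ab r < u} with hT'def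
      have hr₀T' : r₀ ∈ T' := ⟨le_rfl, by rw [hAbeq r₀ hr₀]; exact hua₀⟩
      obtain ⟨R, hR0, hRu⟩ := hunb u
      have hbdd : BddAbove T' := by
        refine ⟨max (max R 1) r₀, fun r hr => ?_⟩
        by_contra hcon
        push_neg at hcon
        have hAb1 : Ab (max R 1) ≤ Ab r :=
          hAbmono (le_trans (le_max_left _ _) hcon.le)
        have hAb2 : A R ≤ Ab (max R 1) := by
          rw [hAbeq _ (le_max_right R 1)]
          exact hmono hR0 (lt_of_lt_of_le one_pos (le_max_right R 1)) (le_max_left R 1)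
        exact absurd hr.2 (not_lt.mpr (by linarith))
      set c := sSup T' with hcdef
      have hr₀c : r₀ ≤ c := le_csSup hbdd hr₀T'
      have hIco : Set.Ico r₀ c ⊆ T' := by
        intro s hs
        obtain ⟨t, htT', hst⟩ := exists_lt_of_lt_csSup ⟨r₀, hr₀T'⟩ hs.2
        exact ⟨hs.1, lt_of_le_of_lt (hAbmono hst.le) htT'.2⟩
      have hsub : {r : ℝ | Ab r < u} ∩ S ⊆ Set.Icc r₀ c := by
        intro r hr
        have hrT' : r ∈ T' := ⟨le_of_lt hr.2.2, hr.1⟩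
        exact ⟨hrT'.1, le_csSup hbdd hrT'⟩
      set m := volume.withDensity (fun r => ENNReal.ofReal (C * deriv A r)) with hmdef
      have hmdens : Measurable fun r : ℝ => ENNReal.ofReal (C * deriv A r) :=
        ENNReal.measurable_ofReal.comp (hgm.const_mul C)
      have hmac : m ≪ volume := withDensity_absolutelyContinuous _ _
      have hIcc : ∀ s : ℝ, r₀ ≤ s → Ab s < u →
          m (Set.Icc r₀ s) ≤ ENNReal.ofReal (C * (u - a₀)) := by
        intro s hs hsu
        rw [hmdef, withDensity_apply _ measurableSet_Icc]
        obtain ⟨hint0, hval0⟩ := hftc r₀ s hr₀0 hs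
        have hint : IntegrableOn (fun r => C * deriv A r) (Set.Icc r₀ s) :=
          ((intervalIntegrable_iff_integrableOn_Icc_of_le hs).mp hint0).const_mul C
        have hnn : 0 ≤ᵐ[volume.restrict (Set.Icc r₀ s)] fun r => C * deriv A r := by
          filter_upwards [ae_restrict_mem measurableSet_Icc] with r hr
          exact mul_nonneg hC.le (hg0 r (lt_of_lt_of_le hr₀0 hr.1))
        rw [← ofReal_integral_eq_lintegral_ofReal hint hnn]
        apply ENNReal.ofReal_le_ofReal
        have hval : ∫ r in Set.Icc r₀ s, C * deriv A r = C * (A s - a₀) := by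
          rw [MeasureTheory.integral_const_mul, MeasureTheory.integral_Icc_eq_integral_Ioc,
            ← intervalIntegral.integral_of_le hs, ← hval0]
        rw [hval]
        have hAs : A s < u := by rw [← hAbeq s (hr₀.trans hs)]; exact hsu
        exact mul_le_mul_of_nonneg_left (by linarith) hC.le
      calc ∫⁻ r in {r : ℝ | Ab r < u} ∩ S, ENNReal.ofReal (C * deriv A r)
          = m ({r : ℝ | Ab r < u} ∩ S) := by
            rw [hmdef, withDensity_apply _ (hTm.inter hSm)]
        _ ≤ m (Set.Icc r₀ c) := measure_mono hsub
        _ ≤ ENNReal.ofReal (C * (u - a₀)) := by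
            rcases eq_or_lt_of_le hr₀c with heq | hlt
            · rw [← heq, Set.Icc_self]
              rw [hmac (Real.volume_singleton)]
              exact zero_le
            · have hIccIco : m (Set.Icc r₀ c) ≤ m (Set.Ico r₀ c) := by
                have : Set.Icc r₀ c ⊆ Set.Ico r₀ c ∪ {c} := by
                  intro r hr
                  rcases lt_or_eq_of_le hr.2 with h | h
                  · exact Or.inl ⟨hr.1, h⟩
                  · exact Or.inr (by simp [h])
                refine le_trans (measure_mono this) ?_
                refine le_trans (measure_union_le _ _) ?_
                rw [hmac (Real.volume_singleton), add_zero]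
              refine le_trans hIccIco ?_
              set q : ℕ → ℝ := fun k => c - (c - r₀)/(k+1) with hqdef
              have hq1 : ∀ k : ℕ, q k ∈ Set.Ico r₀ c := by
                intro k
                have hk1 : (1:ℝ) ≤ (k:ℝ) + 1 := by linarith [Nat.cast_nonneg (α := ℝ) k]
                constructor
                · have : (c - r₀)/((k:ℝ)+1) ≤ c - r₀ :=
                    div_le_self (by linarith) hk1
                  simp only [hqdef]; linarith
                · have : 0 < (c - r₀)/((k:ℝ)+1) := by
                    apply div_pos (by linarith) (by positivity)
                  simp only [hqdef]; linarith
              have hqmono : Monotone q := by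
                intro i j hij
                simp only [hqdef]
                have h1 : (c - r₀)/((j:ℝ)+1) ≤ (c - r₀)/((i:ℝ)+1) := by
                  apply div_le_div_of_nonneg_left (by linarith) (by positivity)
                  exact_mod_cast Nat.succ_le_succ hij
                linarith
              have hU : Set.Ico r₀ c ⊆ ⋃ k, Set.Icc r₀ (q k) := by
                intro r hr
                obtain ⟨k, hk⟩ := exists_nat_ge ((c - r₀)/(c - r))
                refine Set.mem_iUnion.mpr ⟨k, hr.1, ?_⟩
                have hcr : 0 < c - r := by linarith [hr.2]
                rw [div_le_iff₀ hcr] at hk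
                have hk1 : c - r₀ ≤ (c - r) * ((k:ℝ)+1) := by nlinarith
                have : (c - r₀)/((k:ℝ)+1) ≤ c - r := by
                  rw [div_le_iff₀ (by positivity)]
                  linarith
                simp only [hqdef]; linarith
              refine le_trans (measure_mono hU) ?_
              have hdir : Directed (· ⊆ ·) (fun k => Set.Icc r₀ (q k)) :=
                Monotone.directed_le (fun i j hij => Set.Icc_subset_Icc le_rfl (hqmono hij))
              rw [hdir.measure_iUnion]
              exact iSup_le fun k => hIcc (q k) (hq1 k).1 (hIco (hq1 k)).2
    -- assemble part 2
    have hswap : ∫⁻ r in S, ∫⁻ u in Set.Ioi a₀, G (r, u) ∂volume ∂volume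
        = ∫⁻ u in Set.Ioi a₀, ∫⁻ r in S, G (r, u) ∂volume ∂volume :=
      lintegral_lintegral_swap hGmeas.aemeasurable
    calc ν S = ∫⁻ r in S, ENNReal.ofReal (1/r) := hνap S hSm
      _ ≤ ∫⁻ r in S, ∫⁻ u in Set.Ioi a₀, G (r, u) := lintegral_mono_ae hptwise
      _ = ∫⁻ u in Set.Ioi a₀, ∫⁻ r in S, G (r, u) := hswap
      _ ≤ ∫⁻ u in Set.Ioi a₀,
            ENNReal.ofReal (C * (u - a₀)) * ENNReal.ofReal (γ * u ^ (-γ - 1)) := by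
          apply lintegral_mono_ae
          filter_upwards [ae_restrict_mem measurableSet_Ioi] with u hu
          exact hinner u hu
      _ = ∫⁻ u in Set.Ioi a₀,
            ENNReal.ofReal C * ENNReal.ofReal (γ * (u ^ (-γ) - a₀ * u ^ (-γ - 1))) := by
          apply setLIntegral_congr_fun measurableSet_Ioi
          intro u hu
          have hu0 : 0 < u := ha₀.trans hu
          have hua : a₀ ≤ u := le_of_lt hu
          dsimp only
          rw [← ENNReal.ofReal_mul (by nlinarith [hC.le] : (0:ℝ) ≤ C * (u - a₀)),
            ← ENNReal.ofReal_mul hC.le]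
          congr 1
          have hkey : u ^ (-γ) = u ^ (-γ - 1) * u := by
            have h := Real.rpow_add_one hu0.ne' (-γ - 1)
            rw [show -γ - 1 + 1 = -γ from by ring] at h
            exact h
          rw [hkey]; ring
      _ = ENNReal.ofReal C * ENNReal.ofReal (a₀ ^ (1 - γ) / (γ - 1)) := by
          rw [lintegral_const_mul _ (by fun_prop : Measurable fun u : ℝ =>
            ENNReal.ofReal (γ * (u ^ (-γ) - a₀ * u ^ (-γ - 1)))), aux_lint2 hγ ha₀]
      _ = ENNReal.ofReal (C / (γ - 1) * a₀ ^ (1 - γ)) := by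
          rw [← ENNReal.ofReal_mul hC.le]
          congr 1
          ring
  -- combine
  have hlog0 : 0 ≤ Real.log r₀ := Real.log_nonneg hr₀
  have hK0 : 0 ≤ C / (γ - 1) * a₀ ^ (1 - γ) :=
    mul_nonneg (div_nonneg hC.le (by linarith)) (Real.rpow_nonneg ha₀.le _)
  calc ∫⁻ r in E, ENNReal.ofReal (1/r) = ν E := (hνap E hEm).symm
    _ ≤ ν ((E ∩ Set.Icc 1 r₀) ∪ S) := by
        apply measure_mono
        intro r hr
        rcases le_or_gt r r₀ with h | h
        · exact Or.inl ⟨hr, hE hr, h⟩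
        · exact Or.inr ⟨hr, h⟩
    _ ≤ ν (E ∩ Set.Icc 1 r₀) + ν S := measure_union_le _ _
    _ ≤ ENNReal.ofReal (Real.log r₀) + ENNReal.ofReal (C / (γ - 1) * a₀ ^ (1 - γ)) :=
        add_le_add hpart1 hpart2
    _ = ENNReal.ofReal (Real.log r₀ + C / (γ - 1) * a₀ ^ (1 - γ)) :=
        (ENNReal.ofReal_add hlog0 hK0).symm
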